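/- Under a stable edge ordering, the bounded-degree edge-addition projection with threshold θ changes its edge count by at most θ when a node and its incident edges are added to the graph. -/

import Mathlib

/-- Degree of a vertex in a list of edges. -/
def listDeg {V : Type*} [DecidableEq V] (L : List (V × V)) (u : V) : ℕ :=
  (L.filter (fun e => e.1 = u ∨ e.2 = u)).length

/-- Edge-addition projection: process edges in order, keeping an edge iff both
endpoints currently have degree `< θ` among the kept edges. -/
def edgeAddProj {V : Type*} [DecidableEq V] (θ : ℕ) (L : List (V × V)) :
    List (V × V) :=
  L.foldl (fun kept e =>
    if listDeg kept e.1 < θ ∧ listDeg kept e.2 < θ then kept ++ [e] else kept) []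

namespace EAP
variable {V : Type*} [DecidableEq V]

def step (θ : ℕ) (kept : List (V × V)) (e : V × V) : List (V × V) :=
  if listDeg kept e.1 < θ ∧ listDeg kept e.2 < θ then kept ++ [e] else kept

lemma edgeAddProj_eq (θ : ℕ) (L : List (V × V)) :
    edgeAddProj θ L = L.foldl (step θ) [] := rfl

lemma listDeg_append (K : List (V × V)) (e : V × V) (u : V) :
    listDeg (K ++ [e]) u = listDeg K u + (if e.1 = u ∨ e.2 = u then 1 else 0) := by
  simp only [listDeg, List.filter_append, List.length_append]
  congr 1
  by_cases h : e.1 = u ∨ e.2 = u <;> simp [h]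

lemma listDeg_append_int (K : List (V × V)) (e : V × V) (u : V) :
    ((listDeg (K ++ [e]) u : ℤ))
      = (listDeg K u : ℤ) + (if e.1 = u ∨ e.2 = u then 1 else 0) := by
  rw [listDeg_append]
  by_cases h : e.1 = u ∨ e.2 = u <;> simp [h]

lemma listDeg_append_le {θ : ℕ} {K : List (V × V)} {e : V × V}
    (hθ : ∀ u, listDeg K u ≤ θ) (h1 : listDeg K e.1 < θ) (h2 : listDeg K e.2 < θ) :
    ∀ u, listDeg (K ++ [e]) u ≤ θ := by
  intro u
  rw [listDeg_append]
  by_cases h : e.1 = u ∨ e.2 = u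
  · rw [if_pos h]
    rcases h with h | h <;> subst h <;> omega
  · rw [if_neg h]
    simpa using hθ u

lemma sum_listDeg (T : Finset V) (K : List (V × V))
    (hK : ∀ e ∈ K, e.1 ≠ e.2 ∧ e.1 ∈ T ∧ e.2 ∈ T) :
    ∑ u ∈ T, listDeg K u = 2 * K.length := by
  induction K with
  | nil => simp [listDeg]
  | cons e K ih =>
    obtain ⟨hne, h1, h2⟩ := hK e (by simp)
    have hrest : ∀ e' ∈ K, e'.1 ≠ e'.2 ∧ e'.1 ∈ T ∧ e'.2 ∈ T :=
      fun e' h => hK e' (List.mem_cons_of_mem _ h)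
    have hdeg : ∀ u, listDeg (e :: K) u
        = (if e.1 = u ∨ e.2 = u then 1 else 0) + listDeg K u := by
      intro u
      simp only [listDeg, List.filter_cons]
      by_cases h : e.1 = u ∨ e.2 = u <;> simp [h] <;> omega
    rw [Finset.sum_congr rfl (fun u _ => hdeg u), Finset.sum_add_distrib, ih hrest]
    have hsplit : ∀ u, (if e.1 = u ∨ e.2 = u then (1:ℕ) else 0)
        = (if u = e.1 then 1 else 0) + (if u = e.2 then 1 else 0) := by
      intro u
      by_cases ha : u = e.1 <;> by_cases hb : u = e.2 <;> simp_all [eq_comm]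
    rw [Finset.sum_congr rfl (fun u _ => hsplit u), Finset.sum_add_distrib,
      Finset.sum_ite_eq' T e.1, Finset.sum_ite_eq' T e.2]
    simp [h1, h2, List.length_cons]
    ring

lemma sum_abs_step (S : Finset V) (φ χ : V → ℤ) (x y : V) (hx : x ∈ S)
    (hχ : ∀ u, χ u = 0 ∨ χ u = 1)
    (hsupp : ∀ u, χ u ≠ 0 → u = x ∨ u = y)
    (hχx : χ x = 1) (hφx : φ x ≤ -1) :
    ∑ u ∈ S, |φ u + χ u| ≤ ∑ u ∈ S, |φ u| := by
  have key : ∀ u ∈ S, |φ u + χ u| ≤ |φ u| + χ u - 2 * (if u = x then 1 else 0) := by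
    intro u _
    by_cases h : u = x
    · subst h
      rw [hχx]
      have h1 : |φ u + 1| = -(φ u + 1) := abs_of_nonpos (by linarith)
      have h2 : |φ u| = -φ u := abs_of_nonpos (by linarith)
      rw [if_pos rfl]
      linarith
    · rcases hχ u with h0 | h1
      · simp [h, h0]
      · rw [h1]
        simp only [if_neg h, mul_zero]
        have := abs_add_le (φ u) 1
        simp at this
        linarith [abs_one (α := ℤ)]
  have hsum := Finset.sum_le_sum key
  have hχsum : ∑ u ∈ S, χ u ≤ 2 := by
    have pt : ∀ u ∈ S, χ u ≤ (if u = x then (1:ℤ) else 0) + (if u = y then 1 else 0) := by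
      intro u _
      have hx0 : (0:ℤ) ≤ (if u = x then (1:ℤ) else 0) := by split <;> norm_num
      have hy0 : (0:ℤ) ≤ (if u = y then (1:ℤ) else 0) := by split <;> norm_num
      rcases hχ u with h0 | h1
      · rw [h0]; linarith
      · rw [h1]
        rcases hsupp u (by rw [h1]; exact one_ne_zero) with h | h
        · rw [if_pos h]; linarith
        · rw [if_pos h]; linarith
    calc ∑ u ∈ S, χ u ≤ ∑ u ∈ S, ((if u = x then (1:ℤ) else 0) + (if u = y then 1 else 0)) :=
          Finset.sum_le_sum pt
      _ ≤ 2 := by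
          rw [Finset.sum_add_distrib, Finset.sum_ite_eq' S x, Finset.sum_ite_eq' S y]
          split <;> split <;> norm_num
  have hxsum : ∑ u ∈ S, (2 * (if u = x then (1:ℤ) else 0)) = 2 := by
    rw [← Finset.mul_sum, Finset.sum_ite_eq' S x, if_pos hx]
    ring
  calc ∑ u ∈ S, |φ u + χ u|
      ≤ ∑ u ∈ S, (|φ u| + χ u - 2 * (if u = x then 1 else 0)) := hsum
    _ = ∑ u ∈ S, |φ u| + ∑ u ∈ S, χ u - ∑ u ∈ S, (2 * (if u = x then (1:ℤ) else 0)) := by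
        rw [Finset.sum_sub_distrib, Finset.sum_add_distrib]
    _ ≤ ∑ u ∈ S, |φ u| := by rw [hxsum]; linarith

lemma sum_abs_step1 (S : Finset V) (φ χ : V → ℤ) (y : V)
    (hχ : ∀ u, χ u = 0 ∨ χ u = 1)
    (hsupp : ∀ u ∈ S, χ u ≠ 0 → u = y) :
    ∑ u ∈ S, |φ u + χ u| ≤ (∑ u ∈ S, |φ u|) + 1 := by
  have key : ∀ u ∈ S, |φ u + χ u| ≤ |φ u| + (if u = y then 1 else 0) := by
    intro u hu
    by_cases h : χ u = 0
    · simp only [h, add_zero]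
      split <;> [linarith [abs_nonneg (φ u)]; linarith]
    · have hy := hsupp u hu h
      rcases hχ u with h0 | h1
      · exact absurd h0 h
      · rw [h1, if_pos hy]
        have := abs_add_le (φ u) 1
        simpa using this
  calc ∑ u ∈ S, |φ u + χ u| ≤ ∑ u ∈ S, (|φ u| + (if u = y then 1 else 0)) :=
        Finset.sum_le_sum key
    _ ≤ (∑ u ∈ S, |φ u|) + 1 := by
        rw [Finset.sum_add_distrib, Finset.sum_ite_eq' S y]
        split <;> norm_num

def Inv (θ : ℕ) (vplus : V) (S : Finset V) (K K' : List (V × V)) : Prop :=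
  (∀ u, listDeg K u ≤ θ) ∧ (∀ u, listDeg K' u ≤ θ) ∧
  listDeg K' vplus = 0 ∧
  (∀ e ∈ K, e.1 ≠ e.2 ∧ e.1 ∈ insert vplus S ∧ e.2 ∈ insert vplus S) ∧
  (∀ e ∈ K', e.1 ≠ e.2 ∧ e.1 ∈ insert vplus S ∧ e.2 ∈ insert vplus S) ∧
  (∑ u ∈ S, |(listDeg K u : ℤ) - (listDeg K' u : ℤ)|) ≤ (listDeg K vplus : ℤ)

lemma mem_step {θ : ℕ} {K : List (V × V)} {e e' : V × V}
    (h : e' ∈ step θ K e) : e' ∈ K ∨ e' = e := by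
  unfold step at h
  split at h
  · rcases List.mem_append.mp h with h | h
    · exact Or.inl h
    · simp at h; exact Or.inr h
  · exact Or.inl h

lemma inv_step_both (θ : ℕ) (vplus : V) (S : Finset V) (hv : vplus ∉ S)
    (K K' : List (V × V)) (e : V × V)
    (he : e.1 ≠ e.2 ∧ e.1 ∈ insert vplus S ∧ e.2 ∈ insert vplus S)
    (hp1 : e.1 ≠ vplus) (hp2 : e.2 ≠ vplus)
    (h : Inv θ vplus S K K') : Inv θ vplus S (step θ K e) (step θ K' e) := by
  obtain ⟨hKθ, hK'θ, hK'v, hKmem, hK'mem, hsum⟩ := h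
  have he1S : e.1 ∈ S := by
    rcases Finset.mem_insert.mp he.2.1 with h | h
    · exact absurd h hp1
    · exact h
  have he2S : e.2 ∈ S := by
    rcases Finset.mem_insert.mp he.2.2 with h | h
    · exact absurd h hp2
    · exact h
  have hχv : (if e.1 = vplus ∨ e.2 = vplus then (1:ℤ) else 0) = 0 := by
    rw [if_neg]; push_neg; exact ⟨hp1, hp2⟩
  have hχvn : (if e.1 = vplus ∨ e.2 = vplus then (1:ℕ) else 0) = 0 := by
    rw [if_neg]; push_neg; exact ⟨hp1, hp2⟩
  set χ : V → ℤ := fun u => if e.1 = u ∨ e.2 = u then 1 else 0 with hχdef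
  have hχ01 : ∀ u, χ u = 0 ∨ χ u = 1 := by
    intro u; simp only [hχdef]; split <;> simp
  have hχsupp : ∀ u, χ u ≠ 0 → u = e.1 ∨ u = e.2 := by
    intro u hu
    simp only [hχdef] at hu
    by_cases h : e.1 = u ∨ e.2 = u
    · rcases h with h | h
      · exact Or.inl h.symm
      · exact Or.inr h.symm
    · rw [if_neg h] at hu; exact absurd rfl hu
  by_cases hc : listDeg K e.1 < θ ∧ listDeg K e.2 < θ <;>
    by_cases hc' : listDeg K' e.1 < θ ∧ listDeg K' e.2 < θ
  · -- both accept
    rw [step, if_pos hc, step, if_pos hc']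
    refine ⟨listDeg_append_le hKθ hc.1 hc.2, listDeg_append_le hK'θ hc'.1 hc'.2, ?_, ?_, ?_, ?_⟩
    · rw [listDeg_append, hK'v, hχvn]
    · intro e' h'
      rcases List.mem_append.mp h' with h' | h'
      · exact hKmem e' h'
      · simp at h'; subst h'; exact he
    · intro e' h'
      rcases List.mem_append.mp h' with h' | h'
      · exact hK'mem e' h'
      · simp at h'; subst h'; exact he
    · have heq : ∀ u ∈ S, |(listDeg (K ++ [e]) u : ℤ) - (listDeg (K' ++ [e]) u : ℤ)|
          = |(listDeg K u : ℤ) - (listDeg K' u : ℤ)| := by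
        intro u _
        rw [listDeg_append_int, listDeg_append_int]
        ring_nf
      rw [Finset.sum_congr rfl heq, listDeg_append_int]
      simp only [hχv, add_zero]
      exact hsum
  · -- K accepts, K' rejects
    rw [step, if_pos hc, step, if_neg hc']
    refine ⟨listDeg_append_le hKθ hc.1 hc.2, hK'θ, hK'v, ?_, hK'mem, ?_⟩
    · intro e' h'
      rcases List.mem_append.mp h' with h' | h'
      · exact hKmem e' h'
      · simp at h'; subst h'; exact he
    · have heq : ∀ u ∈ S, |(listDeg (K ++ [e]) u : ℤ) - (listDeg K' u : ℤ)|
          = |((listDeg K u : ℤ) - (listDeg K' u : ℤ)) + χ u| := by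
        intro u _
        rw [listDeg_append_int]
        simp only [hχdef]
        ring_nf
      rw [Finset.sum_congr rfl heq, listDeg_append_int]
      simp only [hχv, add_zero]
      -- find blocked endpoint x with listDeg K' x ≥ θ
      rcases not_and_or.mp hc' with hb | hb
      · push_neg at hb
        refine le_trans (sum_abs_step S _ χ e.1 e.2 he1S hχ01 hχsupp ?_ ?_) hsum
        · simp [hχdef]
        · have := hc.1
          omega
      · push_neg at hb
        refine le_trans (sum_abs_step S _ χ e.2 e.1 he2S hχ01
          (fun u hu => (hχsupp u hu).symm) ?_ ?_) hsum
        · simp [hχdef]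
        · have := hc.2
          omega
  · -- K rejects, K' accepts
    rw [step, if_neg hc, step, if_pos hc']
    refine ⟨hKθ, listDeg_append_le hK'θ hc'.1 hc'.2, ?_, hKmem, ?_, ?_⟩
    · rw [listDeg_append, hK'v, hχvn]
    · intro e' h'
      rcases List.mem_append.mp h' with h' | h'
      · exact hK'mem e' h'
      · simp at h'; subst h'; exact he
    · have heq : ∀ u ∈ S, |(listDeg K u : ℤ) - (listDeg (K' ++ [e]) u : ℤ)|
          = |(-((listDeg K u : ℤ) - (listDeg K' u : ℤ))) + χ u| := by
        intro u _
        rw [listDeg_append_int, ← abs_neg]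
        simp only [hχdef]
        ring_nf
      have habs : ∀ u ∈ S, |(-((listDeg K u : ℤ) - (listDeg K' u : ℤ)))|
          = |(listDeg K u : ℤ) - (listDeg K' u : ℤ)| := fun u _ => abs_neg _
      rw [Finset.sum_congr rfl heq]
      rcases not_and_or.mp hc with hb | hb
      · push_neg at hb
        refine le_trans (le_trans (sum_abs_step S _ χ e.1 e.2 he1S hχ01 hχsupp ?_ ?_)
          (le_of_eq (Finset.sum_congr rfl habs))) hsum
        · simp [hχdef]
        · have := hc'.1
          omega
      · push_neg at hb
        refine le_trans (le_trans (sum_abs_step S _ χ e.2 e.1 he2S hχ01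
          (fun u hu => (hχsupp u hu).symm) ?_ ?_)
          (le_of_eq (Finset.sum_congr rfl habs))) hsum
        · simp [hχdef]
        · have := hc'.2
          omega
  · -- both reject
    rw [step, if_neg hc, step, if_neg hc']
    exact ⟨hKθ, hK'θ, hK'v, hKmem, hK'mem, hsum⟩

lemma inv_step_left (θ : ℕ) (vplus : V) (S : Finset V) (hv : vplus ∉ S)
    (K K' : List (V × V)) (e : V × V)
    (he : e.1 ≠ e.2 ∧ e.1 ∈ insert vplus S ∧ e.2 ∈ insert vplus S)
    (hp : e.1 = vplus ∨ e.2 = vplus)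
    (h : Inv θ vplus S K K') : Inv θ vplus S (step θ K e) K' := by
  obtain ⟨hKθ, hK'θ, hK'v, hKmem, hK'mem, hsum⟩ := h
  by_cases hc : listDeg K e.1 < θ ∧ listDeg K e.2 < θ
  · rw [step, if_pos hc]
    refine ⟨listDeg_append_le hKθ hc.1 hc.2, hK'θ, hK'v, ?_, hK'mem, ?_⟩
    · intro e' h'
      rcases List.mem_append.mp h' with h' | h'
      · exact hKmem e' h'
      · simp at h'; subst h'; exact he
    · set χ : V → ℤ := fun u => if e.1 = u ∨ e.2 = u then 1 else 0 with hχdef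
      have hχ01 : ∀ u, χ u = 0 ∨ χ u = 1 := by
        intro u; simp only [hχdef]; split <;> simp
      have heq : ∀ u ∈ S, |(listDeg (K ++ [e]) u : ℤ) - (listDeg K' u : ℤ)|
          = |((listDeg K u : ℤ) - (listDeg K' u : ℤ)) + χ u| := by
        intro u _
        rw [listDeg_append_int]
        simp only [hχdef]
        ring_nf
      have hχv1 : (if e.1 = vplus ∨ e.2 = vplus then (1:ℤ) else 0) = 1 := if_pos hp
      rw [Finset.sum_congr rfl heq, listDeg_append_int, hχv1]
      rcases hp with h1 | h2
      · have hsupp : ∀ u ∈ S, χ u ≠ 0 → u = e.2 := by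
          intro u hu hne
          simp only [hχdef] at hne
          by_cases hcnd : e.1 = u ∨ e.2 = u
          · rcases hcnd with hh | hh
            · exact absurd ((hh.symm.trans h1) ▸ hu) hv
            · exact hh.symm
          · rw [if_neg hcnd] at hne; exact absurd rfl hne
        calc ∑ u ∈ S, |((listDeg K u : ℤ) - (listDeg K' u : ℤ)) + χ u|
            ≤ (∑ u ∈ S, |(listDeg K u : ℤ) - (listDeg K' u : ℤ)|) + 1 :=
              sum_abs_step1 S _ χ e.2 hχ01 hsupp
          _ ≤ (listDeg K vplus : ℤ) + 1 := by linarith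
      · have hsupp : ∀ u ∈ S, χ u ≠ 0 → u = e.1 := by
          intro u hu hne
          simp only [hχdef] at hne
          by_cases hcnd : e.1 = u ∨ e.2 = u
          · rcases hcnd with hh | hh
            · exact hh.symm
            · exact absurd ((hh.symm.trans h2) ▸ hu) hv
          · rw [if_neg hcnd] at hne; exact absurd rfl hne
        calc ∑ u ∈ S, |((listDeg K u : ℤ) - (listDeg K' u : ℤ)) + χ u|
            ≤ (∑ u ∈ S, |(listDeg K u : ℤ) - (listDeg K' u : ℤ)|) + 1 :=
              sum_abs_step1 S _ χ e.1 hχ01 hsupp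
          _ ≤ (listDeg K vplus : ℤ) + 1 := by linarith
  · rw [step, if_neg hc]
    exact ⟨hKθ, hK'θ, hK'v, hKmem, hK'mem, hsum⟩

lemma main (θ : ℕ) (vplus : V) (S : Finset V) (hv : vplus ∉ S) :
    ∀ (L K K' : List (V × V)),
      (∀ e ∈ L, e.1 ≠ e.2 ∧ e.1 ∈ insert vplus S ∧ e.2 ∈ insert vplus S) →
      Inv θ vplus S K K' →
      Inv θ vplus S (L.foldl (step θ) K)
        ((L.filter (fun e => e.1 ≠ vplus ∧ e.2 ≠ vplus)).foldl (step θ) K') := by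
  intro L
  induction L with
  | nil => intro K K' _ h; simpa using h
  | cons e L ih =>
    intro K K' hL h
    have he := hL e (by simp)
    have hLt : ∀ e' ∈ L, e'.1 ≠ e'.2 ∧ e'.1 ∈ insert vplus S ∧ e'.2 ∈ insert vplus S :=
      fun e' h' => hL e' (List.mem_cons_of_mem _ h')
    rw [List.filter_cons]
    by_cases hp : e.1 ≠ vplus ∧ e.2 ≠ vplus
    · rw [if_pos (by simpa using hp)]
      rw [List.foldl_cons, List.foldl_cons]
      exact ih _ _ hLt (inv_step_both θ vplus S hv K K' e he hp.1 hp.2 h)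
    · rw [if_neg (by simpa using hp)]
      rw [List.foldl_cons]
      have hp' : e.1 = vplus ∨ e.2 = vplus := by
        by_contra hcon
        push_neg at hcon
        exact hp ⟨hcon.1, hcon.2⟩
      exact ih _ _ hLt (inv_step_left θ vplus S hv K K' e he hp' h)

end EAP

theorem edgeAddProj_node_sensitivity_aux {V : Type*} [DecidableEq V]
    (θ : ℕ) (L : List (V × V)) (vplus : V)
    (hsimple : ∀ e ∈ L, e.1 ≠ e.2) (hnodup : L.Nodup)
    (hsym : ∀ e ∈ L, (e.2, e.1) ∉ L) :
    |((edgeAddProj θ L).length : ℤ) -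
      ((edgeAddProj θ (L.filter (fun e => e.1 ≠ vplus ∧ e.2 ≠ vplus))).length : ℤ)|
      ≤ θ := by
  classical
  rw [EAP.edgeAddProj_eq, EAP.edgeAddProj_eq]
  set S : Finset V := ((L.map Prod.fst).toFinset ∪ (L.map Prod.snd).toFinset).erase vplus
    with hS
  have hv : vplus ∉ S := Finset.notMem_erase _ _
  have hL : ∀ e ∈ L, e.1 ≠ e.2 ∧ e.1 ∈ insert vplus S ∧ e.2 ∈ insert vplus S := by
    intro e heL
    refine ⟨hsimple e heL, ?_, ?_⟩
    · by_cases h : e.1 = vplus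
      · rw [h]; exact Finset.mem_insert_self _ _
      · refine Finset.mem_insert_of_mem (Finset.mem_erase.mpr ⟨h, ?_⟩)
        apply Finset.mem_union_left
        simp only [List.mem_toFinset, List.mem_map]
        exact ⟨e, heL, rfl⟩
    · by_cases h : e.2 = vplus
      · rw [h]; exact Finset.mem_insert_self _ _
      · refine Finset.mem_insert_of_mem (Finset.mem_erase.mpr ⟨h, ?_⟩)
        apply Finset.mem_union_right
        simp only [List.mem_toFinset, List.mem_map]
        exact ⟨e, heL, rfl⟩
  have hInit : EAP.Inv θ vplus S [] [] := by
    refine ⟨?_, ?_, rfl, ?_, ?_, ?_⟩ <;> simp [listDeg]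
  have hInv := EAP.main θ vplus S hv L [] [] hL hInit
  set A := L.foldl (EAP.step θ) [] with hA
  set B := (L.filter (fun e => e.1 ≠ vplus ∧ e.2 ≠ vplus)).foldl (EAP.step θ) [] with hB
  obtain ⟨hAθ, hBθ, hBv, hAmem, hBmem, hsum⟩ := hInv
  have h2A := EAP.sum_listDeg (insert vplus S) A hAmem
  have h2B := EAP.sum_listDeg (insert vplus S) B hBmem
  rw [Finset.sum_insert hv] at h2A h2B
  rw [hBv] at h2B
  have h2AZ : (listDeg A vplus : ℤ) + ∑ u ∈ S, (listDeg A u : ℤ) = 2 * A.length := by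
    exact_mod_cast h2A
  have h2BZ : (0 : ℤ) + ∑ u ∈ S, (listDeg B u : ℤ) = 2 * B.length := by
    exact_mod_cast h2B
  have hdiff : (2:ℤ) * A.length - 2 * B.length
      = (listDeg A vplus : ℤ) + ∑ u ∈ S, ((listDeg A u : ℤ) - (listDeg B u : ℤ)) := by
    rw [Finset.sum_sub_distrib]
    linarith
  have habs : |∑ u ∈ S, ((listDeg A u : ℤ) - (listDeg B u : ℤ))| ≤ (listDeg A vplus : ℤ) :=
    le_trans (Finset.abs_sum_le_sum_abs _ _) hsum
  have hθA : (listDeg A vplus : ℤ) ≤ θ := by exact_mod_cast hAθ vplus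
  have hmain : |(2:ℤ) * A.length - 2 * B.length| ≤ 2 * θ := by
    rw [hdiff]
    have h1 := abs_add_le ((listDeg A vplus : ℤ)) (∑ u ∈ S, ((listDeg A u : ℤ) - (listDeg B u : ℤ)))
    have h2 : |(listDeg A vplus : ℤ)| = (listDeg A vplus : ℤ) :=
      abs_of_nonneg (by positivity)
    have h3 := abs_le.mp habs
    rw [h2] at h1
    calc |(listDeg A vplus : ℤ) + ∑ u ∈ S, ((listDeg A u : ℤ) - (listDeg B u : ℤ))|
        ≤ (listDeg A vplus : ℤ) + |∑ u ∈ S, ((listDeg A u : ℤ) - (listDeg B u : ℤ))| := h1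
      _ ≤ 2 * θ := by linarith
  have h4 : |(A.length : ℤ) - B.length| * 2 ≤ 2 * θ := by
    calc |(A.length : ℤ) - B.length| * 2 = |((A.length : ℤ) - B.length) * 2| := by
          rw [abs_mul]; norm_num
      _ = |(2:ℤ) * A.length - 2 * B.length| := by ring_nf
      _ ≤ 2 * θ := hmain
  linarith


/-- Under a stable edge ordering, adding a node and its incident edges changes
the edge count of the bounded-degree projection by at most `θ`. -/
theorem edgeAddProj_node_sensitivity {V : Type*} [DecidableEq V]
    (θ : ℕ) (L : List (V × V)) (vplus : V)
    (hsimple : ∀ e ∈ L, e.1 ≠ e.2) (hnodup : L.Nodup)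
    (hsym : ∀ e ∈ L, (e.2, e.1) ∉ L) :
    |((edgeAddProj θ L).length : ℤ) -
      ((edgeAddProj θ (L.filter (fun e => e.1 ≠ vplus ∧ e.2 ≠ vplus))).length : ℤ)|
      ≤ θ := by
  exact edgeAddProj_node_sensitivity_aux θ L vplus hsimple hnodup hsym
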